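/- For D̃4, the positive real roots v with L(v) = v_1+v_2+v_3+v_4−2v_0 ≠ 0 (the positive singular roots) form exactly five orbits under the group generated by the Coxeter maps c• and c∘ acting on positive vectors, namely the orbits of the five coordinate vectors e_1, e_2, e_3, e_4, e_0. In particular every positive singular root is obtained from some coordinate vector by a finite alternating composition of c• and c∘. -/
import Mathlib

set_option linter.unreachableTactic false
set_option linter.unusedTactic false

/-- Tits form of D̃₄, coordinates (v₁,v₂,v₃,v₄,v₀): leaves 0,1,2,3, center 4. -/
def qD4 (x : Fin 5 → ℤ) : ℤ :=
  (∑ i, x i ^ 2) - x 4 * (x 0 + x 1 + x 2 + x 3)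

/-- c• = σ₁σ₂σ₃σ₄ : vᵢ ↦ −vᵢ + v₀ at each leaf. -/
def cBulletD4 (x : Fin 5 → ℤ) : Fin 5 → ℤ :=
  ![x 4 - x 0, x 4 - x 1, x 4 - x 2, x 4 - x 3, x 4]

/-- c∘ = σ₀ : v₀ ↦ −v₀ + v₁+v₂+v₃+v₄ at the center. -/
def cCircD4 (x : Fin 5 → ℤ) : Fin 5 → ℤ :=
  ![x 0, x 1, x 2, x 3, x 0 + x 1 + x 2 + x 3 - x 4]

/-- Apply a finite composition (word) of the maps c• (true) and c∘ (false). Since c•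
and c∘ are involutions, such words realise the whole group they generate. -/
def applyWordD4 : List Bool → (Fin 5 → ℤ) → (Fin 5 → ℤ)
  | [], x => x
  | b :: w, x => (if b then cBulletD4 else cCircD4) (applyWordD4 w x)

lemma q_bullet (x : Fin 5 → ℤ) : qD4 (cBulletD4 x) = qD4 x := by
  simp [qD4, cBulletD4, Fin.sum_univ_five]; ring

lemma q_circ (x : Fin 5 → ℤ) : qD4 (cCircD4 x) = qD4 x := by
  simp [qD4, cCircD4, Fin.sum_univ_five]; ring

lemma bullet_invol (x : Fin 5 → ℤ) : cBulletD4 (cBulletD4 x) = x := by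
  funext i; fin_cases i <;> simp [cBulletD4]

lemma circ_invol (x : Fin 5 → ℤ) : cCircD4 (cCircD4 x) = x := by
  funext i; fin_cases i <;> simp [cCircD4] <;> ring

lemma applyWord_cons_true (w : List Bool) (x : Fin 5 → ℤ) :
    applyWordD4 (true :: w) x = cBulletD4 (applyWordD4 w x) := rfl

lemma applyWord_cons_false (w : List Bool) (x : Fin 5 → ℤ) :
    applyWordD4 (false :: w) x = cCircD4 (applyWordD4 w x) := rfl

set_option maxHeartbeats 2000000 in
/-- Existence, by induction on a bound for the coordinate sum. -/
lemma exists_word : ∀ n : ℕ, ∀ v : Fin 5 → ℤ, (∀ i, 0 ≤ v i) → qD4 v ≤ 1 →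
    v 0 + v 1 + v 2 + v 3 - 2 * v 4 ≠ 0 →
    (v 0 + v 1 + v 2 + v 3 + v 4).toNat ≤ n →
    ∃ g : Fin 5, ∃ w : List Bool, applyWordD4 w (Pi.single g 1) = v := by
  intro n
  induction n with
  | zero =>
      intro v hpos _ hsing hb
      exfalso
      have h0 := hpos 0; have h1 := hpos 1; have h2 := hpos 2
      have h3 := hpos 3; have h4 := hpos 4
      omega
  | succ n ih =>
      intro v hpos hq hsing hb
      have h0 := hpos 0; have h1 := hpos 1; have h2 := hpos 2
      have h3 := hpos 3; have h4 := hpos 4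
      have hq' : v 0 ^ 2 + v 1 ^ 2 + v 2 ^ 2 + v 3 ^ 2 + v 4 ^ 2
          - v 4 * (v 0 + v 1 + v 2 + v 3) ≤ 1 := by
        have := hq; simp only [qD4, Fin.sum_univ_five] at this; linarith
      rcases lt_or_gt_of_ne hsing with hL | hL
      · -- L < 0 : apply c∘
        by_cases hsc : v 0 + v 1 + v 2 + v 3 < v 4
        · -- then v is the center coordinate vector e₄
          refine ⟨4, [], ?_⟩
          have key : v 4 ≤ v 4 * (v 4 - (v 0 + v 1 + v 2 + v 3)) := by
            nlinarith [mul_nonneg h4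
              (show (0:ℤ) ≤ v 4 - (v 0 + v 1 + v 2 + v 3) - 1 by omega)]
          have hsq : v 0 ^ 2 + v 1 ^ 2 + v 2 ^ 2 + v 3 ^ 2 ≤ 1 - v 4 := by nlinarith
          have a : v 0 = 0 := by
            have : v 0 ≤ 0 := by
              nlinarith [sq_nonneg (v 0 - 1), sq_nonneg (v 1), sq_nonneg (v 2), sq_nonneg (v 3)]
            omega
          have b : v 1 = 0 := by
            have : v 1 ≤ 0 := by
              nlinarith [sq_nonneg (v 1 - 1), sq_nonneg (v 0), sq_nonneg (v 2), sq_nonneg (v 3)]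
            omega
          have c : v 2 = 0 := by
            have : v 2 ≤ 0 := by
              nlinarith [sq_nonneg (v 2 - 1), sq_nonneg (v 0), sq_nonneg (v 1), sq_nonneg (v 3)]
            omega
          have d : v 3 = 0 := by
            have : v 3 ≤ 0 := by
              nlinarith [sq_nonneg (v 3 - 1), sq_nonneg (v 0), sq_nonneg (v 1), sq_nonneg (v 2)]
            omega
          have e : v 4 = 1 := by
            have : v 4 ≤ 1 := by nlinarith [sq_nonneg (v 4 - 1)]
            omega
          funext i; fin_cases i <;> simp [applyWordD4, Pi.single_apply] <;> omega
        · push_neg at hsc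
          have hupos : ∀ i, 0 ≤ cCircD4 v i := by
            intro i; fin_cases i <;> simp [cCircD4] <;> omega
          obtain ⟨g, w, hw⟩ := ih (cCircD4 v) hupos (by rw [q_circ]; exact hq)
            (by simp [cCircD4]; omega)
            (by simp [cCircD4]; omega)
          refine ⟨g, false :: w, ?_⟩
          rw [applyWord_cons_false, hw, circ_invol]
      · -- L > 0 : apply c•
        by_cases hc : v 4 = 0
        · -- v is a single leaf coordinate vector
          have hsum : v 0 ^ 2 + v 1 ^ 2 + v 2 ^ 2 + v 3 ^ 2 ≤ 1 := by nlinarith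
          have e0 : v 0 ≤ 1 := by nlinarith
          have e1 : v 1 ≤ 1 := by nlinarith
          have e2 : v 2 ≤ 1 := by nlinarith
          have e3 : v 3 ≤ 1 := by nlinarith
          have hone : (v 0 = 1 ∧ v 1 = 0 ∧ v 2 = 0 ∧ v 3 = 0) ∨
                 (v 0 = 0 ∧ v 1 = 1 ∧ v 2 = 0 ∧ v 3 = 0) ∨
                 (v 0 = 0 ∧ v 1 = 0 ∧ v 2 = 1 ∧ v 3 = 0) ∨
                 (v 0 = 0 ∧ v 1 = 0 ∧ v 2 = 0 ∧ v 3 = 1) := by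
            interval_cases hv0 : v 0 <;> interval_cases hv1 : v 1 <;>
              interval_cases hv2 : v 2 <;> interval_cases hv3 : v 3 <;> omega
          rcases hone with ⟨a,b,c,d⟩ | ⟨a,b,c,d⟩ | ⟨a,b,c,d⟩ | ⟨a,b,c,d⟩
          · exact ⟨0, [], by funext i; fin_cases i <;>
              simp [applyWordD4, Pi.single_apply] <;> omega⟩
          · exact ⟨1, [], by funext i; fin_cases i <;>
              simp [applyWordD4, Pi.single_apply] <;> omega⟩
          · exact ⟨2, [], by funext i; fin_cases i <;>
              simp [applyWordD4, Pi.single_apply] <;> omega⟩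
          · exact ⟨3, [], by funext i; fin_cases i <;>
              simp [applyWordD4, Pi.single_apply] <;> omega⟩
        · have hc1 : 1 ≤ v 4 := by omega
          have le0 : v 0 ≤ v 4 := by
            by_contra h; push_neg at h
            nlinarith [sq_nonneg (2 * v 1 - v 4), sq_nonneg (2 * v 2 - v 4),
              sq_nonneg (2 * v 3 - v 4)]
          have le1 : v 1 ≤ v 4 := by
            by_contra h; push_neg at h
            nlinarith [sq_nonneg (2 * v 0 - v 4), sq_nonneg (2 * v 2 - v 4),
              sq_nonneg (2 * v 3 - v 4)]
          have le2 : v 2 ≤ v 4 := by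
            by_contra h; push_neg at h
            nlinarith [sq_nonneg (2 * v 0 - v 4), sq_nonneg (2 * v 1 - v 4),
              sq_nonneg (2 * v 3 - v 4)]
          have le3 : v 3 ≤ v 4 := by
            by_contra h; push_neg at h
            nlinarith [sq_nonneg (2 * v 0 - v 4), sq_nonneg (2 * v 1 - v 4),
              sq_nonneg (2 * v 2 - v 4)]
          have hupos : ∀ i, 0 ≤ cBulletD4 v i := by
            intro i; fin_cases i <;> simp [cBulletD4] <;> omega
          obtain ⟨g, w, hw⟩ := ih (cBulletD4 v) hupos (by rw [q_bullet]; exact hq)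
            (by simp [cBulletD4]; omega)
            (by simp [cBulletD4]; omega)
          refine ⟨g, true :: w, ?_⟩
          rw [applyWord_cons_true, hw, bullet_invol]

/-- The difference vector of the leaves: flips sign under c•, fixed by c∘. -/
def DD (x : Fin 5 → ℤ) : ℤ × ℤ × ℤ := (x 0 - x 1, x 0 - x 2, x 0 - x 3)

lemma DD_bullet (y : Fin 5 → ℤ) : DD (cBulletD4 y) = -DD y := by
  simp [DD, cBulletD4, Prod.ext_iff]
  try refine ⟨by ring, by ring, by ring⟩

lemma DD_circ (y : Fin 5 → ℤ) : DD (cCircD4 y) = DD y := rfl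

lemma DD_word (w : List Bool) (x : Fin 5 → ℤ) :
    DD (applyWordD4 w x) = DD x ∨ DD (applyWordD4 w x) = -DD x := by
  induction w with
  | nil => left; rfl
  | cons b w ih =>
      cases b
      · rw [applyWord_cons_false, DD_circ]; exact ih
      · rw [applyWord_cons_true, DD_bullet]
        rcases ih with h | h
        · right; rw [h]
        · left; rw [h, neg_neg]

lemma DD_single : ∀ h : Fin 5, DD (Pi.single h 1) =
    if h = 0 then (1,1,1) else if h = 1 then (-1,0,0) else if h = 2 then (0,-1,0)
    else if h = 3 then (0,0,-1) else ((0,0,0) : ℤ×ℤ×ℤ) := by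
  intro h; fin_cases h <;> simp [DD, Pi.single_apply]

/-- Every positive singular root of D̃₄ (positive root with L(v) ≠ 0) lies in the
orbit, under the group generated by c• and c∘, of exactly one of the five coordinate
vectors; in particular it is obtained from a coordinate vector by a finite
composition of c• and c∘. -/
theorem stmt10 (v : Fin 5 → ℤ) (hpos : ∀ i, 0 ≤ v i) (hne : v ≠ 0)
    (hroot : qD4 v ≤ 1) (hsing : v 0 + v 1 + v 2 + v 3 - 2 * v 4 ≠ 0) :
    ∃! g : Fin 5, ∃ w : List Bool, applyWordD4 w (Pi.single g 1) = v := by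
  obtain ⟨g, w, hw⟩ := exists_word _ v hpos hroot hsing (le_refl _)
  refine ⟨g, ⟨w, hw⟩, ?_⟩
  rintro g' ⟨w', hw'⟩
  have h1 := DD_word w (Pi.single g 1)
  have h2 := DD_word w' (Pi.single g' 1)
  rw [hw, DD_single g] at h1
  rw [hw', DD_single g'] at h2
  fin_cases g <;> fin_cases g' <;> simp_all [Prod.ext_iff] <;> omega
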